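/- Let k ≥ 2 and 1 ≤ r ≤ k-1 be integers, let N, β₁, β₂, γ, α, λ > 0 be reals, let I₂ > 0, and let S₀, S₁, …, S_k, V be real numbers satisfying: 0 = -(β₂/N)S₀I₂ + kα·S₁ - λS₀ + αV; 0 = -(β₂/N)S_iI₂ + kα·S_{i+1} - kα·S_i - λS_i for 1 ≤ i ≤ r; S_{i+1} = S_i for r+1 ≤ i ≤ k-1; γI₂ = kα·S_k; (β₂/N)·Σ_{i=0}^{r} S_i = γ; λ·Σ_{i=0}^{r} S_i = αV; and Σ_{i=0}^{k} S_i + V + I₂ = N. Assume additionally that kα(β₂ - γ + λ) - γλr ≠ 0 and (kα)² + kα((k-r-1)γ + β₂ + λ) - γλr ≠ 0. Then β₁·S₀/(Nγ) = (β₁/β₂)·[(kα(β₂ - γ) - γλk)·(kα((k-r)γ + kα)/((kα)² + kα((k-r-1)γ + β₂ + λ) - γλr))^r + λ((k-r)γ + kα)]/(kα(β₂ - γ + λ) - γλr). -/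

import Mathlib

/-- Strain 2-only endemic steady state of the separated immunity model: the competitive
reproduction number of Strain 1 in the presence of Strain 2. -/
theorem separated_strain2_R12
    (k r : ℕ) (hk : 2 ≤ k) (hr1 : 1 ≤ r) (hrk : r ≤ k - 1)
    (N β₁ β₂ γ α lam : ℝ) (hN : 0 < N) (hβ₁ : 0 < β₁) (hβ₂ : 0 < β₂) (hγ : 0 < γ)
    (hα : 0 < α) (hlam : 0 < lam)
    (I₂ : ℝ) (hI₂ : 0 < I₂)
    (S : ℕ → ℝ) (V : ℝ)
    (h1 : 0 = -(β₂ / N) * S 0 * I₂ + (k : ℝ) * α * S 1 - lam * S 0 + α * V)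
    (h2 : ∀ i : ℕ, 1 ≤ i → i ≤ r →
      0 = -(β₂ / N) * S i * I₂ + (k : ℝ) * α * S (i + 1) - (k : ℝ) * α * S i - lam * S i)
    (h3 : ∀ i : ℕ, r + 1 ≤ i → i ≤ k - 1 → S (i + 1) = S i)
    (h4 : γ * I₂ = (k : ℝ) * α * S k)
    (h5 : (β₂ / N) * ∑ i ∈ Finset.range (r + 1), S i = γ)
    (h6 : lam * ∑ i ∈ Finset.range (r + 1), S i = α * V)
    (h7 : ∑ i ∈ Finset.range (k + 1), S i + V + I₂ = N)
    (hden1 : (k : ℝ) * α * (β₂ - γ + lam) - γ * lam * (r : ℝ) ≠ 0)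
    (hden2 : ((k : ℝ) * α) ^ 2 +
      (k : ℝ) * α * (((k : ℝ) - (r : ℝ) - 1) * γ + β₂ + lam) - γ * lam * (r : ℝ) ≠ 0) :
    β₁ * S 0 / (N * γ) =
      β₁ / β₂ *
        (((k : ℝ) * α * (β₂ - γ) - γ * lam * (k : ℝ)) *
            ((k : ℝ) * α * (((k : ℝ) - (r : ℝ)) * γ + (k : ℝ) * α) /
              (((k : ℝ) * α) ^ 2 +
                (k : ℝ) * α * (((k : ℝ) - (r : ℝ) - 1) * γ + β₂ + lam) -
                γ * lam * (r : ℝ))) ^ r +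
          lam * (((k : ℝ) - (r : ℝ)) * γ + (k : ℝ) * α)) /
        ((k : ℝ) * α * (β₂ - γ + lam) - γ * lam * (r : ℝ)) := by
  have hrk' : r + 1 ≤ k := by omega
  set K : ℝ := (k : ℝ) * α with hKdef
  have hK : 0 < K := by positivity
  set u : ℝ := β₂ / N * I₂ with hudef
  have hu : 0 < u := by positivity
  set T : ℝ := ∑ i ∈ Finset.range (r + 1), S i with hTdef
  have hT : T = γ * N / β₂ := by
    field_simp at h5 ⊢
    linarith [h5]
  -- step recurrence
  have hstep : ∀ i : ℕ, 1 ≤ i → i ≤ r → K * S (i + 1) = (u + K + lam) * S i := by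
    intro i hi1 hi2
    have h := h2 i hi1 hi2
    rw [hudef, hKdef]
    linear_combination -h
  have hpow : ∀ j : ℕ, j ≤ r → K ^ j * S (j + 1) = (u + K + lam) ^ j * S 1 := by
    intro j
    induction j with
    | zero => intro _; simp
    | succ n ih =>
      intro h
      have hs := hstep (n + 1) (by omega) h
      have ihn := ih (by omega)
      calc K ^ (n + 1) * S (n + 1 + 1) = K ^ n * (K * S (n + 1 + 1)) := by ring
        _ = K ^ n * ((u + K + lam) * S (n + 1)) := by rw [hs]
        _ = (u + K + lam) * (K ^ n * S (n + 1)) := by ring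
        _ = (u + K + lam) * ((u + K + lam) ^ n * S 1) := by rw [ihn]
        _ = (u + K + lam) ^ (n + 1) * S 1 := by ring
  have hgeo : K ^ r * S (r + 1) = (u + K + lam) ^ r * S 1 := hpow r le_rfl
  -- constancy above r+1
  have hconst : ∀ i : ℕ, r + 1 ≤ i → i ≤ k → S i = S (r + 1) := by
    intro i
    induction i with
    | zero => intro h _; omega
    | succ n ih =>
      intro ha hb
      rcases Nat.lt_or_ge (r + 1) (n + 1) with h | h
      · have hn : r + 1 ≤ n := by omega
        rw [h3 n hn (by omega)]
        exact ih hn (by omega)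
      · have : n + 1 = r + 1 := by omega
        rw [this]
  have hSk : S k = S (r + 1) := hconst k hrk' le_rfl
  -- total sum
  have hsum : ∑ i ∈ Finset.range (k + 1), S i = T + ((k : ℝ) - (r : ℝ)) * S (r + 1) := by
    rw [Finset.range_eq_Ico, ← Finset.sum_Ico_consecutive S (Nat.zero_le (r + 1)) (by omega)]
    have hcg : ∀ i ∈ Finset.Ico (r + 1) (k + 1), S i = S (r + 1) := by
      intro i hi
      simp only [Finset.mem_Ico] at hi
      exact hconst i hi.1 (by omega)
    rw [Finset.sum_congr rfl hcg, Finset.sum_const, Nat.card_Ico, nsmul_eq_mul]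
    have hnn : k + 1 - (r + 1) = k - r := by omega
    rw [hnn, hTdef, Finset.range_eq_Ico]
    push_cast [Nat.cast_sub (show r ≤ k by omega)]
    ring
  -- key scalar relations
  have hS1r : K * S (r + 1) = γ * I₂ := by rw [← hSk]; linarith [h4]
  have hI : I₂ = u * N / β₂ := by rw [hudef]; field_simp
  have hV : V = lam * T / α := by
    field_simp
    linarith [h6]
  -- solve for u
  have hA : u * (((k : ℝ) - (r : ℝ)) * γ + K) = K * (β₂ - γ) - γ * lam * (k : ℝ) := by
    have h7' : T + ((k : ℝ) - (r : ℝ)) * S (r + 1) + V + I₂ = N := by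
      rw [← hsum]; exact h7
    have hS : S (r + 1) = γ * I₂ / K := by field_simp; linarith [hS1r]
    rw [hS, hI, hV, hT, hKdef] at h7'
    field_simp at h7'
    have hsc : (u * (((k : ℝ) - (r : ℝ)) * γ + K) - (K * (β₂ - γ) - γ * lam * (k : ℝ)))
        * (N * β₂ ^ 3 * α) = 0 := by
      rw [hKdef]
      linear_combination (N * β₂ ^ 3 * α) * h7'
    rcases mul_eq_zero.mp hsc with h | h
    · linarith
    · exact absurd h (by positivity)
  set A : ℝ := ((k : ℝ) - (r : ℝ)) * γ + K with hAdef
  have hApos : 0 < A := by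
    have h1' : (1 : ℝ) ≤ (k : ℝ) - (r : ℝ) := by
      have : (r : ℝ) + 1 ≤ (k : ℝ) := by exact_mod_cast hrk'
      linarith
    rw [hAdef]
    nlinarith [hγ, hK]
  -- den2 = (u+K+lam)*A
  have hDen2 : K ^ 2 + K * (((k : ℝ) - (r : ℝ) - 1) * γ + β₂ + lam) - γ * lam * (r : ℝ)
      = (u + K + lam) * A := by
    rw [hAdef]; linear_combination -hA
  have hukl : (0 : ℝ) < u + K + lam := by positivity
  -- Q
  set Q : ℝ := K * A / ((u + K + lam) * A) with hQdef
  have hQ : Q * (u + K + lam) = K := by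
    rw [hQdef]
    field_simp
  have huT : u * T = γ * I₂ := by
    rw [hudef, hT]; field_simp
  have hQpow : Q ^ r * (u + K + lam) ^ r = K ^ r := by
    rw [← mul_pow, hQ]
  have hS1 : K * S 1 = u * T * Q ^ r := by
    have hupow : (0 : ℝ) < (u + K + lam) ^ r := by positivity
    have h1' : (u + K + lam) ^ r * (K * S 1) = (u + K + lam) ^ r * (u * T * Q ^ r) := by
      calc (u + K + lam) ^ r * (K * S 1) = K * ((u + K + lam) ^ r * S 1) := by ring
        _ = K * (K ^ r * S (r + 1)) := by rw [hgeo]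
        _ = (K * S (r + 1)) * K ^ r := by ring
        _ = γ * I₂ * K ^ r := by rw [hS1r]
        _ = u * T * K ^ r := by rw [huT]
        _ = u * T * (Q ^ r * (u + K + lam) ^ r) := by rw [hQpow]
        _ = (u + K + lam) ^ r * (u * T * Q ^ r) := by ring
    exact mul_left_cancel₀ hupow.ne' h1'
  -- S 0 equation
  have hS0 : (u + lam) * S 0 = K * S 1 + lam * T := by
    rw [hudef, hKdef]
    linear_combination h1 - h6
  -- den1 = (u+lam)*A
  have hDen1 : K * (β₂ - γ + lam) - γ * lam * (r : ℝ) = (u + lam) * A := by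
    rw [hAdef]; linear_combination -hA
  -- finish
  rw [hDen1, hDen2, ← hQdef, ← hA]
  have hulne : (0 : ℝ) < u + lam := by positivity
  have hTpos : 0 < T := by rw [hT]; positivity
  have hNγ : N * γ = β₂ * T := by rw [hT]; field_simp
  rw [hNγ]
  have hgoal : S 0 = (u * Q ^ r + lam) * T / (u + lam) := by
    rw [eq_div_iff hulne.ne']
    calc S 0 * (u + lam) = (u + lam) * S 0 := by ring
      _ = K * S 1 + lam * T := hS0
      _ = u * T * Q ^ r + lam * T := by rw [hS1]
      _ = (u * Q ^ r + lam) * T := by ring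
  rw [hgoal]
  field_simp
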